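/- arXiv:2409.01931 — 2 statements merged into one kernel-verified Lean document; each statement's English description precedes it below -/
import Mathlib

section
/- Let n, D be natural numbers and let f be a real-valued function of n vectors in D-dimensional Euclidean space which is O(D)-invariant, i.e. f(Q v₁, ..., Q vₙ) = f(v₁, ..., vₙ) for every linear isometry equivalence Q of ℝ^D and all vectors v₁,...,vₙ. Then there exists a function g from n×n real matrices to ℝ such that f(v₁,...,vₙ) = g(G) for all inputs, where G is the Gram matrix with entries G_{ij} = ⟪v_i, v_j⟫. -/
open scoped RealInnerProductSpace

open Module

private lemma inner_lincomb {D n : ℕ} (v : Fin n → EuclideanSpace ℝ (Fin D))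
    (c d : Fin n → ℝ) :
    ⟪∑ i, c i • v i, ∑ j, d j • v j⟫ = ∑ i, ∑ j, c i * d j * ⟪v i, v j⟫ := by
  rw [sum_inner]
  refine Finset.sum_congr rfl fun i _ => ?_
  rw [inner_sum]
  refine Finset.sum_congr rfl fun j _ => ?_
  rw [real_inner_smul_left, real_inner_smul_right]; ring

private lemma key {D n : ℕ} (v w : Fin n → EuclideanSpace ℝ (Fin D))
    (h : ∀ i j, ⟪v i, v j⟫ = ⟪w i, w j⟫) :
    ∃ Q : EuclideanSpace ℝ (Fin D) ≃ₗᵢ[ℝ] EuclideanSpace ℝ (Fin D),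
      ∀ i, Q (v i) = w i := by
  classical
  let V := EuclideanSpace ℝ (Fin D)
  set A : (Fin n → ℝ) →ₗ[ℝ] V := Fintype.linearCombination ℝ v with hA
  set B : (Fin n → ℝ) →ₗ[ℝ] V := Fintype.linearCombination ℝ w with hB
  have hinner : ∀ c d : Fin n → ℝ, ⟪A c, A d⟫ = ⟪B c, B d⟫ := by
    intro c d
    rw [hA, hB, Fintype.linearCombination_apply, Fintype.linearCombination_apply,
      Fintype.linearCombination_apply, Fintype.linearCombination_apply,
      inner_lincomb, inner_lincomb]
    exact Finset.sum_congr rfl fun i _ => Finset.sum_congr rfl fun j _ => by rw [h i j]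
  have hker : LinearMap.ker A ≤ LinearMap.ker B := by
    intro c hc
    rw [LinearMap.mem_ker] at hc ⊢
    have : ⟪B c, B c⟫ = 0 := by rw [← hinner, hc, inner_zero_left]
    exact inner_self_eq_zero.mp this
  set S := LinearMap.range A
  -- linear map on S sending A c to B c
  set e := A.quotKerEquivRange
  set ψ : S →ₗ[ℝ] V := ((LinearMap.ker A).liftQ B hker).comp e.symm.toLinearMap with hψ
  have hψA : ∀ c : Fin n → ℝ, ψ ⟨A c, LinearMap.mem_range_self A c⟩ = B c := by
    intro c
    have he : e (Submodule.Quotient.mk c) = ⟨A c, LinearMap.mem_range_self A c⟩ := by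
      apply Subtype.ext
      simp [e, LinearMap.quotKerEquivRange]
    rw [hψ, LinearMap.comp_apply, ← he, LinearEquiv.coe_toLinearMap,
      LinearEquiv.symm_apply_apply, Submodule.liftQ_apply]
  have hnorm : ∀ x : S, ‖ψ x‖ = ‖x‖ := by
    rintro ⟨x, hx⟩
    obtain ⟨c, rfl⟩ := hx
    rw [hψA]
    have : ⟪B c, B c⟫ = ⟪A c, A c⟫ := (hinner c c).symm
    have h1 : ‖B c‖ ^ 2 = ‖A c‖ ^ 2 := by
      rw [← real_inner_self_eq_norm_sq, ← real_inner_self_eq_norm_sq, this]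
    exact (sq_eq_sq₀ (norm_nonneg _) (norm_nonneg _)).mp h1
  set L : S →ₗᵢ[ℝ] V := ⟨ψ, hnorm⟩
  set Q := L.extend.toLinearIsometryEquiv rfl
  refine ⟨Q, fun i => ?_⟩
  have hv : v i = A (Pi.single i 1) := by
    rw [hA, Fintype.linearCombination_apply_single, one_smul]
  have hw : w i = B (Pi.single i 1) := by
    rw [hB, Fintype.linearCombination_apply_single, one_smul]
  have hmem : v i ∈ S := hv ▸ LinearMap.mem_range_self A _
  calc Q (v i) = L.extend (v i) := by rw [LinearIsometry.toLinearIsometryEquiv_apply]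
    _ = L ⟨v i, hmem⟩ := L.extend_apply ⟨v i, hmem⟩
    _ = w i := by
        have h2 : (⟨v i, hmem⟩ : S) = ⟨A (Pi.single i 1), LinearMap.mem_range_self A _⟩ :=
          Subtype.ext hv
        rw [show L ⟨v i, hmem⟩ = ψ ⟨v i, hmem⟩ from rfl, h2, hψA, ← hw]

/-- First Fundamental Theorem for O(D): any O(D)-invariant real-valued function of
`n` vectors in `D`-dimensional Euclidean space factors through the Gram matrix. -/
theorem invariant_factors_through_gram (n D : ℕ)
    (f : (Fin n → EuclideanSpace ℝ (Fin D)) → ℝ)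
    (hf : ∀ (Q : EuclideanSpace ℝ (Fin D) ≃ₗᵢ[ℝ] EuclideanSpace ℝ (Fin D))
      (v : Fin n → EuclideanSpace ℝ (Fin D)), f (fun i => Q (v i)) = f v) :
    ∃ g : Matrix (Fin n) (Fin n) ℝ → ℝ,
      ∀ v : Fin n → EuclideanSpace ℝ (Fin D),
        f v = g (Matrix.of fun i j => ⟪v i, v j⟫) := by
  classical
  refine ⟨fun G => if h : ∃ v, (Matrix.of fun i j => ⟪v i, v j⟫) = G then f h.choose else 0,
    fun v => ?_⟩
  have hex : ∃ u : Fin n → EuclideanSpace ℝ (Fin D), (Matrix.of fun i j => ⟪u i, u j⟫) = (Matrix.of fun i j => ⟪v i, v j⟫) :=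
    ⟨v, rfl⟩
  beta_reduce
  rw [dif_pos hex]
  have hspec := hex.choose_spec
  set u := hex.choose
  have hij : ∀ i j, ⟪u i, u j⟫ = ⟪v i, v j⟫ := by
    intro i j
    have := congrFun (congrFun hspec i) j
    simpa using this
  obtain ⟨Q, hQ⟩ := key u v hij
  have := hf Q u
  rw [show (fun i => Q (u i)) = v from funext hQ] at this
  exact this
end

section
/- Let v, w : Fin n → EuclideanSpace ℝ (Fin D) be two finite point configurations with equal pairwise distances, i.e. dist (v i) (v j) = dist (w i) (w j) for all i, j. Then there exists an affine isometry equivalence e of EuclideanSpace ℝ (Fin D) (a rigid motion, possibly including a reflection) such that e (v i) = w i for every i. In other words, the coordinates of a finite configuration of particles are determined by their distance matrix up to a Euclidean isometry. -/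
open scoped RealInnerProductSpace

/-- Two finite point configurations with equal pairwise distances are related by a
Euclidean isometry (rigid motion, possibly with reflection). -/
theorem exists_affineIsometryEquiv_of_dist_eq (n D : ℕ)
    (v w : Fin n → EuclideanSpace ℝ (Fin D))
    (h : ∀ i j, dist (v i) (v j) = dist (w i) (w j)) :
    ∃ e : EuclideanSpace ℝ (Fin D) ≃ᵃⁱ[ℝ] EuclideanSpace ℝ (Fin D),
      ∀ i, e (v i) = w i := by
  rcases isEmpty_or_nonempty (Fin n) with hn | hn
  · exact ⟨AffineIsometryEquiv.refl ℝ _, fun i => (hn.false i).elim⟩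
  obtain ⟨i0⟩ := hn
  set v' : Fin n → EuclideanSpace ℝ (Fin D) := fun i => v i - v i0 with hv'
  set w' : Fin n → EuclideanSpace ℝ (Fin D) := fun i => w i - w i0 with hw'
  have hinner : ∀ i j, ⟪v' i, v' j⟫ = ⟪w' i, w' j⟫ := by
    intro i j
    have h1 : ‖v' i‖ = ‖w' i‖ := by
      simpa [hv', hw', dist_eq_norm] using h i i0
    have h2 : ‖v' j‖ = ‖w' j‖ := by
      simpa [hv', hw', dist_eq_norm] using h j i0
    have h3 : ‖v' i - v' j‖ = ‖w' i - w' j‖ := by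
      have : v' i - v' j = v i - v j := by simp [hv']
      have h' : w' i - w' j = w i - w j := by simp [hw']
      rw [this, h', ← dist_eq_norm, ← dist_eq_norm, h i j]
    have e1 := @norm_sub_sq_real (EuclideanSpace ℝ (Fin D)) _ _ (v' i) (v' j)
    have e2 := @norm_sub_sq_real (EuclideanSpace ℝ (Fin D)) _ _ (w' i) (w' j)
    rw [h1, h2, h3] at e1
    linarith [e1, e2]
  set A : (Fin n → ℝ) →ₗ[ℝ] EuclideanSpace ℝ (Fin D) := Fintype.linearCombination ℝ v' with hA
  set B : (Fin n → ℝ) →ₗ[ℝ] EuclideanSpace ℝ (Fin D) := Fintype.linearCombination ℝ w' with hB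
  have hnorm : ∀ c : Fin n → ℝ, ‖A c‖ = ‖B c‖ := by
    intro c
    have hA2 : ⟪A c, A c⟫ = ⟪B c, B c⟫ := by
      simp only [hA, hB, Fintype.linearCombination_apply, sum_inner, inner_sum,
        real_inner_smul_left, real_inner_smul_right]
      exact Finset.sum_congr rfl fun i _ => Finset.sum_congr rfl fun j _ => by
        rw [hinner j i]
    have := congrArg Real.sqrt hA2
    rwa [real_inner_self_eq_norm_sq, real_inner_self_eq_norm_sq,
      Real.sqrt_sq (norm_nonneg _), Real.sqrt_sq (norm_nonneg _)] at this
  have hker : LinearMap.ker A ≤ LinearMap.ker B := by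
    intro c hc
    rw [LinearMap.mem_ker] at hc ⊢
    have := hnorm c
    rw [hc, norm_zero] at this
    exact norm_eq_zero.mp this.symm
  -- the map on the range of A
  set f : LinearMap.range A →ₗ[ℝ] EuclideanSpace ℝ (Fin D) :=
    ((LinearMap.ker A).liftQ B hker).comp (A.quotKerEquivRange).symm.toLinearMap with hf
  have hfA : ∀ c : Fin n → ℝ, f ⟨A c, LinearMap.mem_range_self A c⟩ = B c := by
    intro c
    simp only [hf, LinearMap.comp_apply, LinearEquiv.coe_coe]
    rw [LinearMap.quotKerEquivRange_symm_apply_image A c (LinearMap.mem_range_self A c)]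
    simp
  have hfnorm : ∀ s : LinearMap.range A, ‖f s‖ = ‖s‖ := by
    rintro ⟨x, c, rfl⟩
    rw [hfA c, ← hnorm c]
    rfl
  set L : LinearMap.range A →ₗᵢ[ℝ] EuclideanSpace ℝ (Fin D) := ⟨f, hfnorm⟩ with hL
  set Lx : EuclideanSpace ℝ (Fin D) →ₗᵢ[ℝ] EuclideanSpace ℝ (Fin D) := L.extend with hLx
  set Le : EuclideanSpace ℝ (Fin D) ≃ₗᵢ[ℝ] EuclideanSpace ℝ (Fin D) := Lx.toLinearIsometryEquiv rfl with hLe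
  refine ⟨((AffineIsometryEquiv.constVAdd ℝ (EuclideanSpace ℝ (Fin D)) (-(v i0))).trans
      Le.toAffineIsometryEquiv).trans (AffineIsometryEquiv.constVAdd ℝ (EuclideanSpace ℝ (Fin D)) (w i0)), ?_⟩
  intro i
  have hLv : Lx (v' i) = w' i := by
    have hmem : v' i ∈ LinearMap.range A := by
      refine ⟨Pi.single i 1, ?_⟩
      simp [hA, Fintype.linearCombination_apply, Pi.single_apply, ite_smul]
    have := L.extend_apply ⟨v' i, hmem⟩
    rw [this]
    have hc : v' i = A (Pi.single i 1) := by
      simp [hA, Fintype.linearCombination_apply, Pi.single_apply, ite_smul]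
    have : (⟨v' i, hmem⟩ : LinearMap.range A) =
        ⟨A (Pi.single i 1), LinearMap.mem_range_self A _⟩ := Subtype.ext hc
    rw [show L ⟨v' i, hmem⟩ = f ⟨v' i, hmem⟩ from rfl, this, hfA]
    simp [hB, Fintype.linearCombination_apply, Pi.single_apply, ite_smul]
  simp only [AffineIsometryEquiv.coe_trans, AffineIsometryEquiv.coe_constVAdd,
    Function.comp_apply, LinearIsometryEquiv.coe_toAffineIsometryEquiv]
  have : Le (-v i0 +ᵥ v i) = w' i := by
    have : (-v i0 +ᵥ v i : EuclideanSpace ℝ (Fin D)) = v' i := by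
      simp [hv', vadd_eq_add]; abel
    rw [this]
    exact hLv
  rw [this]
  simp [hw', vadd_eq_add]
end
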